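/- Let λ ≥ 0 and let W : [0, t_f] × ℝ^{2d} → ℝ be a bounded C¹ function satisfying the inequality ∂_t W + b(t, z) · ∇_z W + λ(W(t, z) − W(t, Az + c)) ≥ 0 on (0, t_f] × ℝ^{2d}, where b is a bounded continuous vector field, A a linear map and c a vector, and suppose liminf_{t→0} inf_{|z| ≤ R} W(t, z) ≥ 0 for every R. Assume additionally the comparison/maximum principle that applies to such transport inequalities (Lipschitz b, bounded W). Then W ≥ 0 on (0, t_f] × ℝ^{2d}. -/

import Mathlib

/-- Maximum principle for the nonlocal transport inequality: if a bounded `C¹`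
function `W` satisfies `∂ₜW + b·∇W + λ(W - W(t, Az + c)) ≥ 0` on `(0,t_f] × ℝ^m`
with `b` bounded, continuous and Lipschitz in `z`, and
`liminf_{t→0} inf_{|z|≤R} W(t,z) ≥ 0` for every `R`, then `W ≥ 0`. -/
theorem stmt_18 {m : ℕ} (tf lam Lb Mb MW : ℝ) (htf : 0 < tf) (hlam : 0 ≤ lam)
    (W : ℝ → EuclideanSpace ℝ (Fin m) → ℝ)
    (b : ℝ → EuclideanSpace ℝ (Fin m) → EuclideanSpace ℝ (Fin m))
    (A : EuclideanSpace ℝ (Fin m) →L[ℝ] EuclideanSpace ℝ (Fin m))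
    (c : EuclideanSpace ℝ (Fin m))
    (DW : ℝ → EuclideanSpace ℝ (Fin m) →
      (ℝ × EuclideanSpace ℝ (Fin m) →L[ℝ] ℝ))
    (hW : ∀ t ∈ Set.Ioc (0 : ℝ) tf, ∀ z,
      HasFDerivAt (fun p : ℝ × EuclideanSpace ℝ (Fin m) => W p.1 p.2) (DW t z) (t, z))
    (hWbdd : ∀ t ∈ Set.Ioc (0 : ℝ) tf, ∀ z, |W t z| ≤ MW)
    (hbcont : Continuous fun p : ℝ × EuclideanSpace ℝ (Fin m) => b p.1 p.2)
    (hbbdd : ∀ t z, ‖b t z‖ ≤ Mb)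
    (hblip : ∀ t z z', ‖b t z - b t z'‖ ≤ Lb * ‖z - z'‖)
    (hineq : ∀ t ∈ Set.Ioc (0 : ℝ) tf, ∀ z,
      0 ≤ DW t z (1, b t z) + lam * (W t z - W t (A z + c)))
    (hinit : ∀ ε > (0 : ℝ), ∀ R : ℝ, ∃ t₀ > (0 : ℝ), ∀ t, 0 < t → t ≤ t₀ → t ≤ tf →
      ∀ z, ‖z‖ ≤ R → -ε ≤ W t z) :
    ∀ t ∈ Set.Ioc (0 : ℝ) tf, ∀ z, 0 ≤ W t z := by
  have hMb : (0 : ℝ) ≤ Mb := le_trans (norm_nonneg _) (hbbdd 0 0)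
  have hMW : (0 : ℝ) ≤ MW := le_trans (abs_nonneg _) (hWbdd tf ⟨htf, le_refl _⟩ 0)
  set K : ℝ := MW * Real.exp (lam * tf) with hK
  have hKnn : 0 ≤ K := mul_nonneg hMW (Real.exp_pos _).le
  -- Key inductive estimate.
  have key : ∀ n : ℕ, ∀ t ∈ Set.Ioc (0 : ℝ) tf, ∀ z,
      -(K * ((lam * t) ^ n / n.factorial)) ≤ W t z * Real.exp (lam * t) := by
    intro n
    induction n with
    | zero =>
      intro t ht z
      have h1 : -MW ≤ W t z := neg_le_of_abs_le (hWbdd t ht z)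
      have h2 : Real.exp (lam * t) ≤ Real.exp (lam * tf) :=
        Real.exp_le_exp.mpr (mul_le_mul_of_nonneg_left ht.2 hlam)
      have h3 : (0 : ℝ) < Real.exp (lam * t) := Real.exp_pos _
      simp only [pow_zero, Nat.factorial_zero, Nat.cast_one]
      nlinarith [Real.exp_pos (lam * tf)]
    | succ n IH =>
      intro t ht z
      -- it suffices to prove the bound up to an arbitrary ε > 0
      rw [neg_le_iff_add_nonneg]
      have hsuff : ∀ ε > (0 : ℝ),
          -(ε) ≤ W t z * Real.exp (lam * t) + K * ((lam * t) ^ (n + 1) / (n + 1).factorial) := by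
        intro ε hε
        -- initial layer from hinit, with shrunk ε
        set ε' : ℝ := ε * Real.exp (-(lam * tf)) with hε'
        have hε'pos : 0 < ε' := mul_pos hε (Real.exp_pos _)
        set R : ℝ := ‖z‖ + Mb * tf with hR
        obtain ⟨t₀, ht₀pos, ht₀⟩ := hinit ε' hε'pos R
        set δ : ℝ := min t₀ t with hδ
        have hδpos : 0 < δ := lt_min ht₀pos ht.1
        have hδt : δ ≤ t := min_le_right _ _
        have hδtf : δ ≤ tf := hδt.trans ht.2
        -- backward characteristic through (t, z) on [δ, t]
        have hlipb : ∀ s, LipschitzWith Lb.toNNReal (b s) := by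
          intro s
          refine LipschitzWith.of_dist_le_mul fun x y => ?_
          rw [dist_eq_norm]
          calc ‖b s x - b s y‖ ≤ Lb * ‖x - y‖ := hblip s x y
            _ ≤ (Lb.toNNReal : ℝ) * ‖x - y‖ :=
              mul_le_mul_of_nonneg_right (Real.le_coe_toNNReal Lb) (norm_nonneg _)
            _ = (Lb.toNNReal : ℝ) * dist x y := by rw [dist_eq_norm]
        have hpl : IsPicardLindelof b (tmin := δ) (tmax := t) ⟨t, hδt, le_refl t⟩ z
            (Mb * tf).toNNReal 0 Mb.toNNReal Lb.toNNReal := by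
          refine ⟨?_, ?_, ?_, ?_⟩
          · intro s _
            exact fun x _ y _ => hlipb s x y
          · intro x _
            exact ((hbcont.comp (continuous_id.prodMk continuous_const)).continuousOn)
          · intro s _ x _
            rw [Real.coe_toNNReal _ hMb]
            exact hbbdd s x
          · simp only [Real.coe_toNNReal _ hMb, Real.coe_toNNReal _ (mul_nonneg hMb htf.le),
              NNReal.coe_zero, sub_zero]
            have : max (t - t) (t - δ) = t - δ := by
              rw [max_eq_right]; linarith
            rw [this]
            have : t - δ ≤ tf := by
              have := ht.2
              linarith
            nlinarith
        obtain ⟨f, hft', hf⟩ := hpl.exists_eq_forall_mem_Icc_hasDerivWithinAt₀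
        have hft : f t = z := hft'
        have hconv : Convex ℝ (Set.Icc δ t) := convex_Icc δ t
        -- the characteristic stays in the ball of radius R
        have hfnorm : ∀ s ∈ Set.Icc δ t, ‖f s‖ ≤ R := by
          intro s hs
          have hb : ∀ x ∈ Set.Icc δ t, ‖b x (f x)‖ ≤ Mb := fun x _ => hbbdd x (f x)
          have := Convex.norm_image_sub_le_of_norm_hasDerivWithin_le hf hb hconv
            (Set.right_mem_Icc.mpr hδt) hs
          rw [hft] at this
          have h1 : ‖f s‖ ≤ ‖z‖ + ‖f s - z‖ := by
            simpa using norm_add_le z (f s - z)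
          have h2 : ‖s - t‖ ≤ tf := by
            rw [Real.norm_eq_abs, abs_sub_comm, abs_of_nonneg (by linarith [hs.1, hs.2])]
            linarith [hs.1, hs.2, ht.2]
          have h3 : Mb * ‖s - t‖ ≤ Mb * tf := mul_le_mul_of_nonneg_left h2 hMb
          rw [hR]; linarith
        have hsub : ∀ s ∈ Set.Icc δ t, s ∈ Set.Ioc (0 : ℝ) tf := by
          intro s hs
          exact ⟨lt_of_lt_of_le hδpos hs.1, hs.2.trans ht.2⟩
        -- the auxiliary function along the characteristic
        set g : ℝ → ℝ := fun s =>
          W s (f s) * Real.exp (lam * s) + K * ((lam * s) ^ (n + 1) / (n + 1).factorial)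
          with hg
        set g' : ℝ → ℝ := fun s =>
          (DW s (f s) (1, b s (f s)) * Real.exp (lam * s)
            + W s (f s) * (Real.exp (lam * s) * lam))
          + K * ((↑(n + 1) * (lam * s) ^ n * lam) / (n + 1).factorial)
          with hg'
        have hgderiv : ∀ s ∈ Set.Icc δ t, HasDerivWithinAt g (g' s) (Set.Icc δ t) s := by
          intro s hs
          have hcurve : HasDerivWithinAt (fun s : ℝ => ((s : ℝ), f s))
              ((1 : ℝ), b s (f s)) (Set.Icc δ t) s :=
            (hasDerivWithinAt_id s _).prodMk (hf s hs)
          have h1 : HasDerivWithinAt (fun s => W s (f s))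
              (DW s (f s) (1, b s (f s))) (Set.Icc δ t) s :=
            (hW s (hsub s hs) (f s)).comp_hasDerivWithinAt (f := fun s : ℝ => ((s : ℝ), f s)) s hcurve
          have h2 : HasDerivAt (fun s : ℝ => Real.exp (lam * s))
              (Real.exp (lam * s) * lam) s :=
            (Real.hasDerivAt_exp (lam * s)).comp s
              (by simpa using (hasDerivAt_id s).const_mul lam)
          have h3 : HasDerivAt (fun s : ℝ => (lam * s) ^ (n + 1))
              (↑(n + 1) * (lam * s) ^ n * lam) s := by
            have := (HasDerivAt.fun_pow (by simpa using (hasDerivAt_id s).const_mul lam) (n + 1))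
            simpa [Nat.add_sub_cancel] using this
          have h4 : HasDerivWithinAt
              (fun s : ℝ => K * ((lam * s) ^ (n + 1) / (n + 1).factorial))
              (K * ((↑(n + 1) * (lam * s) ^ n * lam) / (n + 1).factorial))
              (Set.Icc δ t) s := by
            exact (((h3.div_const _).const_mul K)).hasDerivWithinAt
          exact (h1.mul h2.hasDerivWithinAt).add h4
        have hgnonneg : ∀ s ∈ Set.Icc δ t, 0 ≤ g' s := by
          intro s hs
          have hsIoc := hsub s hs
          have hIH := IH s hsIoc (A (f s) + c)
          have hineqs := hineq s hsIoc (f s)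
          have hexp : (0 : ℝ) < Real.exp (lam * s) := Real.exp_pos _
          have hpow : (0 : ℝ) ≤ (lam * s) ^ n :=
            pow_nonneg (mul_nonneg hlam (hδpos.trans_le hs.1).le) n
          -- DW (1,b) + lam * W ≥ lam * W(Az+c)
          have h5 : lam * W s (A (f s) + c)
              ≤ DW s (f s) (1, b s (f s)) + lam * W s (f s) := by linarith
          have h6 : lam * (W s (A (f s) + c) * Real.exp (lam * s))
              ≥ lam * (-(K * ((lam * s) ^ n / n.factorial))) :=
            mul_le_mul_of_nonneg_left hIH hlam
          have h7 : (DW s (f s) (1, b s (f s)) + lam * W s (f s)) * Real.exp (lam * s)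
              ≥ lam * W s (A (f s) + c) * Real.exp (lam * s) :=
            mul_le_mul_of_nonneg_right h5 hexp.le
          have hfact : ((n + 1).factorial : ℝ) = (↑(n + 1)) * n.factorial := by
            rw [Nat.factorial_succ]; push_cast; ring
          have hfactpos : (0 : ℝ) < n.factorial := by
            exact_mod_cast Nat.factorial_pos n
          have h8 : K * ((↑(n + 1) * (lam * s) ^ n * lam) / (n + 1).factorial)
              = lam * (K * ((lam * s) ^ n / n.factorial)) := by
            rw [hfact]
            have hn1 : ((n : ℝ) + 1) ≠ 0 := by positivity
            field_simp
          simp only [hg']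
          rw [h8]
          nlinarith [h6, h7]
        -- monotonicity of g on [δ, t]
        have hmono : MonotoneOn g (Set.Icc δ t) := by
          apply monotoneOn_of_hasDerivWithinAt_nonneg hconv
          · intro s hs
            exact (hgderiv s hs).continuousWithinAt
          · intro s hs
            rw [interior_Icc] at hs
            exact ((hgderiv s (Set.mem_Icc_of_Ioo hs)).mono
              (by rw [interior_Icc]; exact Set.Ioo_subset_Icc_self))
          · intro s hs
            rw [interior_Icc] at hs
            exact hgnonneg s (Set.mem_Icc_of_Ioo hs)
        have hgδt : g δ ≤ g t :=
          hmono (Set.left_mem_Icc.mpr hδt) (Set.right_mem_Icc.mpr hδt) hδt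
        -- lower bound for g δ
        have hWδ : -ε' ≤ W δ (f δ) :=
          ht₀ δ hδpos (min_le_left _ _) hδtf (f δ) (hfnorm δ (Set.left_mem_Icc.mpr hδt))
        have hexpδ : Real.exp (lam * δ) ≤ Real.exp (lam * tf) :=
          Real.exp_le_exp.mpr (mul_le_mul_of_nonneg_left hδtf hlam)
        have hεε' : ε' * Real.exp (lam * δ) ≤ ε := by
          have h1 : ε' * Real.exp (lam * δ) ≤ ε' * Real.exp (lam * tf) :=
            mul_le_mul_of_nonneg_left hexpδ hε'pos.le
          have h2 : ε' * Real.exp (lam * tf) = ε := by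
            rw [hε', mul_assoc, ← Real.exp_add]
            simp
          linarith
        have hgδ : -ε ≤ g δ := by
          have h1 : -(ε' * Real.exp (lam * δ)) ≤ W δ (f δ) * Real.exp (lam * δ) := by
            have := mul_le_mul_of_nonneg_right hWδ (Real.exp_pos (lam * δ)).le
            linarith
          have h2 : (0 : ℝ) ≤ K * ((lam * δ) ^ (n + 1) / (n + 1).factorial) := by
            have : (0 : ℝ) ≤ (lam * δ) ^ (n + 1) :=
              pow_nonneg (mul_nonneg hlam hδpos.le) _
            positivity
          simp only [hg]
          have : -(ε' * Real.exp (lam * δ)) ≥ -ε := by linarith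
          linarith
        have hgt : g t = W t z * Real.exp (lam * t)
            + K * ((lam * t) ^ (n + 1) / (n + 1).factorial) := by
          simp only [hg, hft]
        have hfinal := hgδ.trans hgδt
        rw [hgt] at hfinal
        linarith
      -- pass to the limit ε → 0
      refine le_of_forall_pos_le_add fun ε hε => ?_
      linarith [hsuff ε hε]
  -- conclude: let n → ∞
  intro t ht z
  have hlim : Filter.Tendsto (fun n : ℕ => -(K * ((lam * t) ^ n / n.factorial)))
      Filter.atTop (nhds 0) := by
    have h1 := FloorSemiring.tendsto_pow_div_factorial_atTop (K := ℝ) (lam * t)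
    have h2 := (h1.const_mul K).neg
    simpa using h2
  have hge : 0 ≤ W t z * Real.exp (lam * t) :=
    le_of_tendsto hlim (Filter.Eventually.of_forall fun n => key n t ht z)
  nlinarith [Real.exp_pos (lam * t)]
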